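/- arXiv:2509.05900 — 2 statements merged into one kernel-verified Lean document; each statement's English description precedes it below -/
import Mathlib

section
/- Let C be a symmetric monoidal closed category and T a commutative monoid object in C. Let Φ : T ⊗ Ω → Ω be a left action and Φ♭ : Ω → [T, Ω] its flat adjoint. Then Φ♭ equalizes the two morphisms σ♭ and U_Φ♭ from [T, Ω] to [T, [T, Ω]], where σ is the shift action and U_Φ is the transfer action on [T, Ω]: that is, σ♭ ∘ Φ♭ = U_Φ♭ ∘ Φ♭. -/
open CategoryTheory MonoidalCategory MonoidalClosed Limits

universe v u

variable {C : Type u} [Category.{v} C] [MonoidalCategory C] [SymmetricCategory C]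
  [MonoidalClosed C]

/-- A left action of a monoid object `T` on an object: unit and associativity laws. -/
def IsLeftAction (T : Mon C) {X : C} (F : T.X ⊗ X ⟶ X) : Prop :=
  ((MonObj.one (X := T.X)) ▷ X) ≫ F = (λ_ X).hom ∧
  ((MonObj.mul (X := T.X)) ▷ X) ≫ F = (α_ T.X T.X X).hom ≫ (T.X ◁ F) ≫ F

/-- The shift morphism on the path object `[T, Ω]`: the curried form of
`T ⊗ T ⊗ [T,Ω] → T ⊗ [T,Ω] → Ω`, i.e. `(μ ⊗ [T,Ω])` followed by evaluation. -/
noncomputable def shift (T : Mon C) (Ω : C) :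
    T.X ⊗ (ihom T.X).obj Ω ⟶ (ihom T.X).obj Ω :=
  MonoidalClosed.curry ((α_ T.X T.X ((ihom T.X).obj Ω)).inv ≫
    ((MonObj.mul (X := T.X)) ▷ (ihom T.X).obj Ω) ≫ (ihom.ev T.X).app Ω)

/-- The transfer operator on `[X, Ω]` induced by `Φ : T ⊗ Ω ⟶ Ω`: the curried form of
`X ⊗ T ⊗ [X,Ω] → T ⊗ X ⊗ [X,Ω] → T ⊗ Ω → Ω` (swap, then evaluation, then `Φ`). -/
noncomputable def transfer (T : Mon C) {Ω : C} (Φ : T.X ⊗ Ω ⟶ Ω) (X : C) :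
    T.X ⊗ (ihom X).obj Ω ⟶ (ihom X).obj Ω :=
  MonoidalClosed.curry ((α_ X T.X ((ihom X).obj Ω)).inv ≫
    ((β_ X T.X).hom ▷ (ihom X).obj Ω) ≫ (α_ T.X X ((ihom X).obj Ω)).hom ≫
    (T.X ◁ (ihom.ev X).app Ω) ≫ Φ)

/-!
STATEMENT 9: For a commutative monoid object T and a left action Φ : T ⊗ Ω → Ω, the
flat adjoint Φ♭ : Ω → [T, Ω] equalizes the flat adjoints σ♭ and U_Φ♭ of the shift and
transfer actions on [T, Ω]: σ♭ ∘ Φ♭ = U_Φ♭ ∘ Φ♭.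
-/

theorem flat_equalizes_shift_transfer (T : Mon C) (Ω : C)
    (hcomm : (β_ T.X T.X).hom ≫ (MonObj.mul (X := T.X)) = (MonObj.mul (X := T.X)))
    (Φ : T.X ⊗ Ω ⟶ Ω) (hΦ : IsLeftAction T Φ) :
    MonoidalClosed.curry Φ ≫ MonoidalClosed.curry (shift T Ω) =
      MonoidalClosed.curry Φ ≫ MonoidalClosed.curry (transfer T Φ T.X) := by
  rw [← curry_natural_left, ← curry_natural_left]
  congr 1
  rw [shift, transfer, ← curry_natural_left, ← curry_natural_left]
  congr 1
  have hev : (T.X ◁ MonoidalClosed.curry Φ) ≫ (ihom.ev T.X).app Ω = Φ :=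
    MonoidalClosed.uncurry_curry Φ
  obtain ⟨-, hassoc⟩ := hΦ
  calc T.X ◁ (T.X ◁ MonoidalClosed.curry Φ) ≫
      ((α_ T.X T.X ((ihom T.X).obj Ω)).inv ≫
        ((MonObj.mul (X := T.X)) ▷ (ihom T.X).obj Ω) ≫ (ihom.ev T.X).app Ω)
      = (α_ T.X T.X Ω).inv ≫ ((T.X ⊗ T.X) ◁ MonoidalClosed.curry Φ) ≫
        ((MonObj.mul (X := T.X)) ▷ (ihom T.X).obj Ω) ≫ (ihom.ev T.X).app Ω := by
        rw [MonoidalCategory.associator_inv_naturality_right_assoc]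
    _ = (α_ T.X T.X Ω).inv ≫ ((MonObj.mul (X := T.X)) ▷ Ω) ≫ Φ := by
        rw [whisker_exchange_assoc, hev]
    _ = (α_ T.X T.X Ω).inv ≫ ((β_ T.X T.X).hom ▷ Ω) ≫ ((MonObj.mul (X := T.X)) ▷ Ω) ≫ Φ := by
        rw [← comp_whiskerRight_assoc, hcomm]
    _ = (α_ T.X T.X Ω).inv ≫ ((β_ T.X T.X).hom ▷ Ω) ≫ (α_ T.X T.X Ω).hom ≫
          (T.X ◁ Φ) ≫ Φ := by rw [hassoc]
    _ = T.X ◁ (T.X ◁ MonoidalClosed.curry Φ) ≫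
      ((α_ T.X T.X ((ihom T.X).obj Ω)).inv ≫
        ((β_ T.X T.X).hom ▷ (ihom T.X).obj Ω) ≫ (α_ T.X T.X ((ihom T.X).obj Ω)).hom ≫
        (T.X ◁ (ihom.ev T.X).app Ω) ≫ Φ) := by
        rw [MonoidalCategory.associator_inv_naturality_right_assoc,
          whisker_exchange_assoc, MonoidalCategory.associator_naturality_right_assoc,
          ← MonoidalCategory.whiskerLeft_comp_assoc, hev]
end

section
/- Let C be a symmetric monoidal closed category, T a commutative monoid object, and Φ : T ⊗ Ω → Ω a left action with flat adjoint Φ♭ : Ω → [T, Ω]. Then Φ♭ is an equalizer of σ♭, U_Φ♭ : [T, Ω] ⇉ [T, [T, Ω]]: for every morphism a : A → [T,Ω] with σ♭ ∘ a = U_Φ♭ ∘ a, there exists a unique b : A → Ω with Φ♭ ∘ b = a. Consequently, the subshift domain E_Φ (the equalizer object of σ♭ and U_Φ♭) is isomorphic to Ω. -/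
open CategoryTheory MonoidalCategory MonoidalClosed Limits

universe v u

variable {C : Type u} [Category.{v} C] [MonoidalCategory C] [SymmetricCategory C]
  [MonoidalClosed C]

/-!
STATEMENT 10: For a commutative monoid object T and a left action Φ : T ⊗ Ω → Ω, the
flat adjoint Φ♭ : Ω → [T, Ω] is an equalizer of σ♭ and U_Φ♭ : [T, Ω] ⇉ [T, [T, Ω]]:
any a : A → [T,Ω] equalizing them factors uniquely through Φ♭.  Consequently the
subshift domain E_Φ (any equalizer object of σ♭ and U_Φ♭) is isomorphic to Ω.
-/

set_option linter.unusedSectionVars false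

/-- Evaluation at the unit of the monoid. -/
noncomputable def evAtUnit (T : Mon C) (Ω : C) : (ihom T.X).obj Ω ⟶ Ω :=
  (λ_ ((ihom T.X).obj Ω)).inv ≫ ((MonObj.one (X := T.X)) ▷ ((ihom T.X).obj Ω)) ≫ (ihom.ev T.X).app Ω

lemma comp_evAtUnit {T : Mon C} {Ω A : C} (a : A ⟶ (ihom T.X).obj Ω) :
    a ≫ evAtUnit T Ω = (λ_ A).inv ≫ ((MonObj.one (X := T.X)) ▷ A) ≫ MonoidalClosed.uncurry a := by
  rw [evAtUnit, MonoidalClosed.uncurry_eq, leftUnitor_inv_naturality_assoc,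
    whisker_exchange_assoc]

lemma curry_comp_evAtUnit {T : Mon C} {Ω : C} (Φ : T.X ⊗ Ω ⟶ Ω)
    (h1 : ((MonObj.one (X := T.X)) ▷ Ω) ≫ Φ = (λ_ Ω).hom) :
    MonoidalClosed.curry Φ ≫ evAtUnit T Ω = 𝟙 Ω := by
  rw [comp_evAtUnit, MonoidalClosed.uncurry_curry, h1, Iso.inv_hom_id]

/-- The equalizing condition, uncurried. -/
lemma cond_iff (T : Mon C) {Ω : C} (Φ : T.X ⊗ Ω ⟶ Ω) {A : C} (a : A ⟶ (ihom T.X).obj Ω) :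
    (a ≫ MonoidalClosed.curry (shift T Ω) = a ≫ MonoidalClosed.curry (transfer T Φ T.X)) ↔
      (((MonObj.mul (X := T.X)) ▷ A) ≫ MonoidalClosed.uncurry a =
        ((β_ T.X T.X).hom ▷ A) ≫ (α_ T.X T.X A).hom ≫ (T.X ◁ MonoidalClosed.uncurry a) ≫ Φ) := by
  rw [← MonoidalClosed.curry_natural_left, ← MonoidalClosed.curry_natural_left,
    MonoidalClosed.curry_injective.eq_iff, shift, transfer,
    ← MonoidalClosed.curry_natural_left, ← MonoidalClosed.curry_natural_left,
    MonoidalClosed.curry_injective.eq_iff]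
  rw [associator_inv_naturality_right_assoc, whisker_exchange_assoc, ← MonoidalClosed.uncurry_eq,
    associator_inv_naturality_right_assoc, whisker_exchange_assoc,
    associator_naturality_right_assoc, ← MonoidalCategory.whiskerLeft_comp_assoc,
    ← MonoidalClosed.uncurry_eq]
  exact cancel_epi (α_ T.X T.X A).inv

lemma act_of_cond (T : Mon C) {Ω A : C} (Φ : T.X ⊗ Ω ⟶ Ω) (g : T.X ⊗ A ⟶ Ω)
    (h : ((MonObj.mul (X := T.X)) ▷ A) ≫ g =
      ((β_ T.X T.X).hom ▷ A) ≫ (α_ T.X T.X A).hom ≫ (T.X ◁ g) ≫ Φ) :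
    (T.X ◁ ((λ_ A).inv ≫ ((MonObj.one (X := T.X)) ▷ A) ≫ g)) ≫ Φ = g := by
  have hβ : (λ_ T.X).inv ≫ (β_ (𝟙_ C) T.X).hom = (ρ_ T.X).inv := by
    rw [← cancel_mono (ρ_ T.X).hom]
    simp [braiding_rightUnitor]
  have htr : ((ρ_ T.X).inv ▷ A) ≫ (α_ T.X (𝟙_ C) A).hom = T.X ◁ (λ_ A).inv := by
    rw [← cancel_mono (T.X ◁ (λ_ A).hom)]
    simp
  have h2 := congrArg (fun m => (((λ_ T.X).inv ≫ ((MonObj.one (X := T.X)) ▷ T.X)) ▷ A) ≫ m) h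
  simp only [comp_whiskerRight, Category.assoc] at h2
  -- simplify the left-hand side of h2 to `g`
  rw [← comp_whiskerRight_assoc ((MonObj.one (X := T.X)) ▷ T.X) (MonObj.mul (X := T.X)), MonObj.one_mul T.X,
    ← comp_whiskerRight_assoc, Iso.inv_hom_id, id_whiskerRight, Category.id_comp] at h2
  -- simplify the right-hand side of h2
  rw [← comp_whiskerRight_assoc ((MonObj.one (X := T.X)) ▷ T.X) (β_ T.X T.X).hom,
    BraidedCategory.braiding_naturality_left, comp_whiskerRight, Category.assoc,
    ← comp_whiskerRight_assoc (λ_ T.X).inv (β_ (𝟙_ C) T.X).hom, hβ,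
    associator_naturality_middle_assoc, ← Category.assoc, htr] at h2
  simp only [MonoidalCategory.whiskerLeft_comp, Category.assoc]
  exact h2.symm

theorem flat_is_equalizer_of_shift_transfer (T : Mon C) (Ω : C)
    (hcomm : (β_ T.X T.X).hom ≫ (MonObj.mul (X := T.X)) = (MonObj.mul (X := T.X)))
    (Φ : T.X ⊗ Ω ⟶ Ω) (hΦ : IsLeftAction T Φ) :
    (∀ (A : C) (a : A ⟶ (ihom T.X).obj Ω),
        a ≫ MonoidalClosed.curry (shift T Ω) =
          a ≫ MonoidalClosed.curry (transfer T Φ T.X) →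
        ∃! b : A ⟶ Ω, b ≫ MonoidalClosed.curry Φ = a) ∧
    (∀ (E : C) (q : E ⟶ (ihom T.X).obj Ω)
        (w : q ≫ MonoidalClosed.curry (shift T Ω) =
          q ≫ MonoidalClosed.curry (transfer T Φ T.X)),
        IsLimit (Fork.ofι q w) → Nonempty (E ≅ Ω)) := by
  have hret := curry_comp_evAtUnit Φ hΦ.1
  have part1 : ∀ (A : C) (a : A ⟶ (ihom T.X).obj Ω),
      a ≫ MonoidalClosed.curry (shift T Ω) =
        a ≫ MonoidalClosed.curry (transfer T Φ T.X) →
      ∃! b : A ⟶ Ω, b ≫ MonoidalClosed.curry Φ = a := by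
    intro A a h
    refine ⟨a ≫ evAtUnit T Ω, ?_, ?_⟩
    · apply MonoidalClosed.uncurry_injective
      rw [MonoidalClosed.uncurry_natural_left, MonoidalClosed.uncurry_curry, comp_evAtUnit]
      exact act_of_cond T Φ (MonoidalClosed.uncurry a) ((cond_iff T Φ a).mp h)
    · intro b' hb'
      rw [← hb', Category.assoc, hret, Category.comp_id]
  refine ⟨part1, ?_⟩
  intro E q w hl
  have w0 : MonoidalClosed.curry Φ ≫ MonoidalClosed.curry (shift T Ω) =
      MonoidalClosed.curry Φ ≫ MonoidalClosed.curry (transfer T Φ T.X) := by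
    rw [cond_iff T Φ, MonoidalClosed.uncurry_curry, ← hΦ.2,
      ← comp_whiskerRight_assoc, hcomm]
  obtain ⟨b, hb, -⟩ := part1 E q w
  obtain ⟨c, hc⟩ := Fork.IsLimit.lift' hl (MonoidalClosed.curry Φ) w0
  simp only [Fork.ι_ofι] at hc
  haveI : Mono q := by
    have := mono_of_isLimit_fork hl
    simpa using this
  refine ⟨⟨b, c, ?_, ?_⟩⟩
  · rw [← cancel_mono q, Category.assoc, hc, hb, Category.id_comp]
  · rw [← Category.comp_id (c ≫ b), ← hret, ← Category.assoc, Category.assoc c b, hb, hc]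
end
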